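/- The Gauss curvature integrand of a surface in R^m as a composed Lagrangian: define on jets of maps R^2 → R^m the function L = Σ_{a,b} (x^a_{11} x^b_{22} − x^a_{12} x^b_{12}) P^{ab} / √(det g), where g_{ij} = Σ_a x^a_i x^a_j is assumed positive definite and P^{ab} = δ^{ab} − x^a_i g^{ij} x^b_j is the normal projector. Then L is a covariant 2-Lagrangian of weight 1 in the infinitesimal sense: for every pair of indices i, j ∈ {1,2}, x^a_i ∂L/∂x^a_j + 2 x^a_{ik} ∂L/∂x^a_{jk} = δ^j_i L (summation over a, k). -/

import Mathlib

open scoped BigOperators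
open Matrix

/-- Second-order jets of maps `ℝ² → ℝ^m` (the zeroth-order coordinates `x^a`
are irrelevant for the Lagrangian below): first derivatives `x^a_i` and second
derivatives `x^a_{ij}` (recorded with both orders of `(i,j)`; the geometric
points are the symmetric ones `x^a_{ij} = x^a_{ji}`). -/
abbrev Jet2 (m : ℕ) := (Fin 2 → Fin m → ℝ) × (Fin 2 → Fin 2 → Fin m → ℝ)

/-- Partial derivative with respect to the first-order variable `x^a_i`. -/
noncomputable def pdU {m : ℕ} (i : Fin 2) (a : Fin m) (L : Jet2 m → ℝ)
    (p : Jet2 m) : ℝ :=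
  deriv (fun t =>
    L (fun i' a' => if i' = i ∧ a' = a then t else p.1 i' a', p.2)) (p.1 i a)

/-- Partial derivative with respect to the second-order variable `x^a_{ij}`. -/
noncomputable def pdW {m : ℕ} (i j : Fin 2) (a : Fin m) (L : Jet2 m → ℝ)
    (p : Jet2 m) : ℝ :=
  deriv (fun t =>
    L (p.1, fun i' j' a' =>
        if i' = i ∧ j' = j ∧ a' = a then t else p.2 i' j' a')) (p.2 i j a)

/-- The induced metric `g_{ij} = Σ_a x^a_i x^a_j`. -/
noncomputable def gMat {m : ℕ} (p : Jet2 m) : Matrix (Fin 2) (Fin 2) ℝ :=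
  Matrix.of fun i j => ∑ a, p.1 i a * p.1 j a

/-- The symmetrized second derivatives. -/
noncomputable def wSym {m : ℕ} (p : Jet2 m) (a : Fin m) (i j : Fin 2) : ℝ :=
  (p.2 i j a + p.2 j i a) / 2

/-- The projector `P^{ab} = δ^{ab} − x^a_i g^{ij} x^b_j` onto the normal plane. -/
noncomputable def normProj {m : ℕ} (p : Jet2 m) (a b : Fin m) : ℝ :=
  (if a = b then 1 else 0) -
    ∑ i, ∑ j, p.1 i a * (gMat p)⁻¹ i j * p.1 j b

/-- The Gauss curvature integrand
`L = Σ_{a,b} (x^a_{11} x^b_{22} − x^a_{12} x^b_{12}) P^{ab} / √(det g)`. -/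
noncomputable def gaussL {m : ℕ} (p : Jet2 m) : ℝ :=
  (∑ a, ∑ b,
    (wSym p a 0 0 * wSym p b 1 1 - wSym p a 0 1 * wSym p b 0 1) * normProj p a b)
    / Real.sqrt (gMat p).det



variable {m : ℕ}

/-- action of a 2×2 matrix on a jet (prolongation of linear coordinate change) -/
noncomputable def act (A : Matrix (Fin 2) (Fin 2) ℝ) (p : Jet2 m) : Jet2 m :=
  (fun k a => ∑ l, A k l * p.1 l a,
   fun k l a => ∑ r, ∑ s, A k r * A l s * p.2 r s a)

lemma gMat_eq (p : Jet2 m) : gMat p = Matrix.of p.1 * (Matrix.of p.1)ᵀ := by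
  ext i j
  simp [gMat, Matrix.mul_apply, Matrix.transpose_apply]

lemma act_fst_mat (A : Matrix (Fin 2) (Fin 2) ℝ) (p : Jet2 m) :
    Matrix.of (act A p).1 = A * Matrix.of p.1 := by
  ext k a
  simp [act, Matrix.mul_apply]

lemma gMat_act (A : Matrix (Fin 2) (Fin 2) ℝ) (p : Jet2 m) :
    gMat (act A p) = A * gMat p * Aᵀ := by
  rw [gMat_eq, act_fst_mat, gMat_eq, Matrix.transpose_mul]
  simp only [Matrix.mul_assoc]

lemma det_gMat_act (A : Matrix (Fin 2) (Fin 2) ℝ) (p : Jet2 m) :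
    (gMat (act A p)).det = A.det ^ 2 * (gMat p).det := by
  rw [gMat_act]
  simp [Matrix.det_mul, Matrix.det_transpose]
  ring

lemma wSym_act (A : Matrix (Fin 2) (Fin 2) ℝ) (p : Jet2 m) (a : Fin m) (k l : Fin 2) :
    wSym (act A p) a k l = ∑ r, ∑ s, A k r * A l s * wSym p a r s := by
  simp only [wSym, act, Fin.sum_univ_two]
  ring

lemma mulVec_dot (A : Matrix (Fin 2) (Fin 2) ℝ) (v w : Fin 2 → ℝ) :
    (A *ᵥ v) ⬝ᵥ w = v ⬝ᵥ (Aᵀ *ᵥ w) := by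
  simp only [dotProduct, Matrix.mulVec, Matrix.transpose_apply,
    Fin.sum_univ_two]
  ring

lemma conjInvAux (A g : Matrix (Fin 2) (Fin 2) ℝ) (hA : IsUnit A.det) :
    Aᵀ * (A * g * Aᵀ)⁻¹ * A = g⁻¹ := by
  rw [Matrix.mul_inv_rev, Matrix.mul_inv_rev]
  have hAT : IsUnit (Aᵀ).det := by rwa [Matrix.det_transpose]
  calc Aᵀ * ((Aᵀ)⁻¹ * (g⁻¹ * A⁻¹)) * A
      = (Aᵀ * (Aᵀ)⁻¹) * (g⁻¹ * (A⁻¹ * A)) := by simp only [Matrix.mul_assoc]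
    _ = g⁻¹ := by
        rw [Matrix.mul_nonsing_inv _ hAT, Matrix.nonsing_inv_mul _ hA]
        simp

lemma quad_inv (A : Matrix (Fin 2) (Fin 2) ℝ) (hA : IsUnit A.det) (p : Jet2 m)
    (a b : Fin m) :
    ∑ i, ∑ j, (act A p).1 i a * (gMat (act A p))⁻¹ i j * (act A p).1 j b
      = ∑ i, ∑ j, p.1 i a * (gMat p)⁻¹ i j * p.1 j b := by
  have hq : ∀ (q : Jet2 m) (M : Matrix (Fin 2) (Fin 2) ℝ) (a b : Fin m),
      ∑ i, ∑ j, q.1 i a * M i j * q.1 j b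
        = (fun i => q.1 i a) ⬝ᵥ (M *ᵥ fun j => q.1 j b) := by
    intro q M a b
    simp [dotProduct, Matrix.mulVec, Finset.mul_sum, mul_assoc, Fin.sum_univ_two]
    ring
  rw [hq, hq, gMat_act]
  have hv : ∀ c, (fun k => (act A p).1 k c) = A *ᵥ (fun k => p.1 k c) := by
    intro c; funext k; simp [act, Matrix.mulVec, dotProduct]
  rw [hv, hv, mulVec_dot, Matrix.mulVec_mulVec, Matrix.mulVec_mulVec,
    conjInvAux A (gMat p) hA]

lemma normProj_act (A : Matrix (Fin 2) (Fin 2) ℝ) (hA : IsUnit A.det) (p : Jet2 m)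
    (a b : Fin m) : normProj (act A p) a b = normProj p a b := by
  unfold normProj
  rw [quad_inv A hA]

lemma gInv_symm (p : Jet2 m) : (gMat p)⁻¹ 0 1 = (gMat p)⁻¹ 1 0 := by
  have hgs : (gMat p)ᵀ = gMat p := by
    ext i j
    simp only [gMat, Matrix.transpose_apply, Matrix.of_apply]
    exact Finset.sum_congr rfl fun a _ => mul_comm _ _
  calc (gMat p)⁻¹ 0 1 = ((gMat p)⁻¹)ᵀ 1 0 := rfl
    _ = ((gMat p)ᵀ)⁻¹ 1 0 := by rw [Matrix.transpose_nonsing_inv]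
    _ = (gMat p)⁻¹ 1 0 := by rw [hgs]

lemma normProj_symm (p : Jet2 m) (a b : Fin m) : normProj p a b = normProj p b a := by
  unfold normProj
  have hδ : (if a = b then (1:ℝ) else 0) = if b = a then 1 else 0 := by
    by_cases h : a = b <;> simp [h, Ne.symm]
  simp only [Fin.sum_univ_two, gInv_symm p, hδ]
  ring

noncomputable def numer (q : Jet2 m) : ℝ :=
  ∑ a, ∑ b, (wSym q a 0 0 * wSym q b 1 1 - wSym q a 0 1 * wSym q b 0 1) * normProj q a b

lemma gaussL_eq_numer (q : Jet2 m) : gaussL q = numer q / Real.sqrt (gMat q).det := rfl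

lemma wSym_symm (q : Jet2 m) (a : Fin m) : wSym q a 1 0 = wSym q a 0 1 := by
  unfold wSym; ring

lemma numer_pair (A : Matrix (Fin 2) (Fin 2) ℝ) (p : Jet2 m) (a b : Fin m) :
    (wSym (act A p) a 0 0 * wSym (act A p) b 1 1
      - wSym (act A p) a 0 1 * wSym (act A p) b 0 1)
    + (wSym (act A p) b 0 0 * wSym (act A p) a 1 1
      - wSym (act A p) b 0 1 * wSym (act A p) a 0 1)
    = A.det ^ 2 * ((wSym p a 0 0 * wSym p b 1 1 - wSym p a 0 1 * wSym p b 0 1)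
      + (wSym p b 0 0 * wSym p a 1 1 - wSym p b 0 1 * wSym p a 0 1)) := by
  simp only [wSym_act, Fin.sum_univ_two, Matrix.det_fin_two, wSym_symm]
  ring

lemma pair_sum (P F : Fin m → Fin m → ℝ) (hP : ∀ a b, P a b = P b a) :
    ∑ a, ∑ b, (F a b + F b a) * P a b = 2 * ∑ a, ∑ b, F a b * P a b := by
  simp only [add_mul, Finset.sum_add_distrib]
  have h : (∑ a, ∑ b, F b a * P a b) = ∑ a, ∑ b, F a b * P a b := by
    rw [Finset.sum_comm]
    exact Finset.sum_congr rfl fun b _ => Finset.sum_congr rfl fun a _ => by rw [hP]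
  rw [h]; ring

lemma numer_act (A : Matrix (Fin 2) (Fin 2) ℝ) (hA : IsUnit A.det) (p : Jet2 m) :
    numer (act A p) = A.det ^ 2 * numer p := by
  unfold numer
  simp only [normProj_act A hA]
  have hP := normProj_symm p
  have h1 := pair_sum (normProj p)
    (fun a b => wSym (act A p) a 0 0 * wSym (act A p) b 1 1
      - wSym (act A p) a 0 1 * wSym (act A p) b 0 1) hP
  have h2 := pair_sum (normProj p)
    (fun a b => wSym p a 0 0 * wSym p b 1 1 - wSym p a 0 1 * wSym p b 0 1) hP
  have h3 : (∑ a, ∑ b,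
      ((wSym (act A p) a 0 0 * wSym (act A p) b 1 1
        - wSym (act A p) a 0 1 * wSym (act A p) b 0 1)
      + (wSym (act A p) b 0 0 * wSym (act A p) a 1 1
        - wSym (act A p) b 0 1 * wSym (act A p) a 0 1)) * normProj p a b)
      = A.det ^ 2 * ∑ a, ∑ b,
        ((wSym p a 0 0 * wSym p b 1 1 - wSym p a 0 1 * wSym p b 0 1)
        + (wSym p b 0 0 * wSym p a 1 1 - wSym p b 0 1 * wSym p a 0 1))
          * normProj p a b := by
    rw [Finset.mul_sum]
    refine Finset.sum_congr rfl fun a _ => ?_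
    rw [Finset.mul_sum]
    refine Finset.sum_congr rfl fun b _ => ?_
    rw [numer_pair A p a b, mul_assoc]
  linear_combination (1/2 : ℝ) * h3 - (1/2 : ℝ) * h1 + (A.det ^ 2 / 2) * h2

lemma gaussL_act (A : Matrix (Fin 2) (Fin 2) ℝ) (hA : A.det ≠ 0) (p : Jet2 m)
    (hg : 0 < (gMat p).det) :
    gaussL (act A p) = |A.det| * gaussL p := by
  rw [gaussL_eq_numer, gaussL_eq_numer,
    numer_act A (isUnit_iff_ne_zero.mpr hA) p, det_gMat_act]
  have h1 : Real.sqrt (A.det ^ 2 * (gMat p).det)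
      = |A.det| * Real.sqrt (gMat p).det := by
    rw [Real.sqrt_mul (sq_nonneg _), Real.sqrt_sq_eq_abs]
  rw [h1]
  have h2 : Real.sqrt (gMat p).det ≠ 0 := ne_of_gt (Real.sqrt_pos.mpr hg)
  have h3 : |A.det| ≠ 0 := abs_ne_zero.mpr hA
  field_simp
  rw [← sq_abs A.det]
  ring

noncomputable def gInvE {m : ℕ} (q : Jet2 m) (i j : Fin 2) : ℝ :=
  ((gMat q).det)⁻¹ * (gMat q).adjugate i j

lemma inv_entry_eq (q : Jet2 m) (i j : Fin 2) : (gMat q)⁻¹ i j = gInvE q i j := by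
  rw [Matrix.inv_def, gInvE]
  simp [Ring.inverse_eq_inv', Matrix.smul_apply, smul_eq_mul]

lemma gaussL_eq_gaussE (q : Jet2 m) :
    gaussL q =
      (∑ a, ∑ b, (wSym q a 0 0 * wSym q b 1 1 - wSym q a 0 1 * wSym q b 0 1) *
        ((if a = b then (1:ℝ) else 0) - ∑ i, ∑ j, q.1 i a * gInvE q i j * q.1 j b))
      / Real.sqrt (gMat q).det := by
  unfold gaussL normProj
  simp only [inv_entry_eq]

lemma diff_gMat_entry (i j : Fin 2) (p : Jet2 m) :
    DifferentiableAt ℝ (fun q : Jet2 m => gMat q i j) p := by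
  have : (fun q : Jet2 m => gMat q i j) = fun q : Jet2 m => ∑ a, q.1 i a * q.1 j a := by
    funext q; simp [gMat]
  rw [this]
  exact DifferentiableAt.fun_sum fun a _ => by fun_prop

lemma diff_det (p : Jet2 m) :
    DifferentiableAt ℝ (fun q : Jet2 m => (gMat q).det) p := by
  have : (fun q : Jet2 m => (gMat q).det)
      = fun q : Jet2 m => gMat q 0 0 * gMat q 1 1 - gMat q 0 1 * gMat q 1 0 := by
    funext q; rw [Matrix.det_fin_two]
  rw [this]
  exact ((diff_gMat_entry 0 0 p).mul (diff_gMat_entry 1 1 p)).sub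
    ((diff_gMat_entry 0 1 p).mul (diff_gMat_entry 1 0 p))

lemma diff_gInvE (i j : Fin 2) (p : Jet2 m) (hd : (gMat p).det ≠ 0) :
    DifferentiableAt ℝ (fun q : Jet2 m => gInvE q i j) p := by
  have hadj : DifferentiableAt ℝ (fun q : Jet2 m => (gMat q).adjugate i j) p := by
    fin_cases i <;> fin_cases j <;>
      simp only [Matrix.adjugate_fin_two, Matrix.cons_val', Matrix.cons_val_zero,
        Matrix.cons_val_one, Matrix.head_cons, Matrix.empty_val',
        Matrix.cons_val_fin_one, Matrix.head_fin_const] <;>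
      first
        | exact diff_gMat_entry _ _ p
        | exact (diff_gMat_entry _ _ p).neg
  exact ((diff_det p).inv hd).mul hadj

lemma diff_gaussL (p : Jet2 m) (hd : 0 < (gMat p).det) :
    DifferentiableAt ℝ (gaussL (m := m)) p := by
  have hsq : DifferentiableAt ℝ (fun q : Jet2 m => Real.sqrt (gMat q).det) p :=
    (diff_det p).sqrt (ne_of_gt hd)
  have hW : ∀ (a : Fin m) (i j : Fin 2),
      DifferentiableAt ℝ (fun q : Jet2 m => wSym q a i j) p := by
    intro a i j
    unfold wSym; fun_prop
  have hnum : DifferentiableAt ℝ (fun q : Jet2 m =>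
      ∑ a, ∑ b, (wSym q a 0 0 * wSym q b 1 1 - wSym q a 0 1 * wSym q b 0 1) *
        ((if a = b then (1:ℝ) else 0)
          - ∑ i, ∑ j, q.1 i a * gInvE q i j * q.1 j b)) p := by
    refine DifferentiableAt.fun_sum fun a _ => DifferentiableAt.fun_sum fun b _ => ?_
    refine DifferentiableAt.mul ?_ ?_
    · exact ((hW a 0 0).mul (hW b 1 1)).sub ((hW a 0 1).mul (hW b 0 1))
    · refine (differentiableAt_const _).sub ?_
      refine DifferentiableAt.fun_sum fun i _ => DifferentiableAt.fun_sum fun j _ => ?_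
      refine DifferentiableAt.mul (DifferentiableAt.mul (by fun_prop) ?_) (by fun_prop)
      exact diff_gInvE i j p (ne_of_gt hd)
  have : gaussL (m := m) = fun q =>
      (∑ a, ∑ b, (wSym q a 0 0 * wSym q b 1 1 - wSym q a 0 1 * wSym q b 0 1) *
        ((if a = b then (1:ℝ) else 0)
          - ∑ i, ∑ j, q.1 i a * gInvE q i j * q.1 j b))
      * (Real.sqrt (gMat q).det)⁻¹ := by
    funext q; rw [gaussL_eq_gaussE q, div_eq_mul_inv]
  rw [this]
  exact hnum.mul (hsq.inv (ne_of_gt (Real.sqrt_pos.mpr hd)))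

noncomputable def eU {m : ℕ} (j : Fin 2) (a : Fin m) : Jet2 m :=
  ((fun i' a' => if i' = j ∧ a' = a then 1 else 0), 0)

noncomputable def eW {m : ℕ} (j l : Fin 2) (a : Fin m) : Jet2 m :=
  (0, fun i' j' a' => if i' = j ∧ j' = l ∧ a' = a then 1 else 0)

lemma pdU_eq {p : Jet2 m} {D : Jet2 m →L[ℝ] ℝ} (hF : HasFDerivAt gaussL D p)
    (j : Fin 2) (a : Fin m) : pdU j a gaussL p = D (eU j a) := by
  set c := p.1 j a with hc
  have hS : (fun t : ℝ =>
      ((fun i' a' => if i' = j ∧ a' = a then t else p.1 i' a', p.2) : Jet2 m))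
      = fun t => p + (t - c) • eU j a := by
    funext t
    refine Prod.ext ?_ ?_
    · funext i' a'
      show _ = p.1 i' a' + (t - c) * (if i' = j ∧ a' = a then (1:ℝ) else 0)
      by_cases h : i' = j ∧ a' = a
      · obtain ⟨h1, h2⟩ := h
        subst h1; subst h2
        simp [hc]
      · simp [h]
    · funext i' j' a'
      show _ = p.2 i' j' a' + (t - c) * 0
      simp
  have hpath : HasDerivAt (fun t : ℝ => p + (t - c) • (eU (m := m) j a)) (eU j a) c := by
    have h1 : HasDerivAt (fun t : ℝ => t - c) 1 c := (hasDerivAt_id c).sub_const c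
    simpa using (h1.smul_const (eU (m := m) j a)).const_add p
  have hF' : HasFDerivAt gaussL D (p + (c - c) • (eU (m := m) j a)) := by
    simpa using hF
  have hcomp := hF'.comp_hasDerivAt c hpath
  unfold pdU
  have hfun : (fun t => gaussL
      ((fun i' a' => if i' = j ∧ a' = a then t else p.1 i' a', p.2) : Jet2 m))
      = fun t => gaussL (p + (t - c) • eU j a) := by
    funext t; exact congrArg gaussL (congrFun hS t)
  rw [hfun]
  exact (show HasDerivAt (fun t => gaussL (p + (t - c) • eU j a)) (D (eU j a)) c from hcomp).deriv

lemma pdW_eq {p : Jet2 m} {D : Jet2 m →L[ℝ] ℝ} (hF : HasFDerivAt gaussL D p)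
    (j l : Fin 2) (a : Fin m) :
    pdW j l a gaussL p = D (eW j l a) := by
  unfold pdW
  set c := p.2 j l a with hc
  have hS : (fun t : ℝ =>
      ((p.1, fun i' j' a' => if i' = j ∧ j' = l ∧ a' = a then t else p.2 i' j' a') : Jet2 m))
      = fun t => p + (t - c) • eW j l a := by
    funext t
    refine Prod.ext ?_ ?_
    · funext i' a'
      show _ = p.1 i' a' + (t - c) * 0
      simp
    · funext i' j' a'
      show _ = p.2 i' j' a' + (t - c) * (if i' = j ∧ j' = l ∧ a' = a then (1:ℝ) else 0)
      by_cases h : i' = j ∧ j' = l ∧ a' = a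
      · obtain ⟨h1, h2, h3⟩ := h
        subst h1; subst h2; subst h3
        simp [hc]
      · simp [h]
  have hpath : HasDerivAt (fun t : ℝ => p + (t - c) • (eW (m := m) j l a)) (eW j l a) c := by
    have h1 : HasDerivAt (fun t : ℝ => t - c) 1 c := (hasDerivAt_id c).sub_const c
    simpa using (h1.smul_const (eW (m := m) j l a)).const_add p
  have hF' : HasFDerivAt gaussL D (p + (c - c) • (eW (m := m) j l a)) := by
    simpa using hF
  have hcomp := hF'.comp_hasDerivAt c hpath
  have hfun : (fun t => gaussL
      ((p.1, fun i' j' a' => if i' = j ∧ j' = l ∧ a' = a then t else p.2 i' j' a') : Jet2 m))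
      = fun t => gaussL (p + (t - c) • eW j l a) := by
    funext t; exact congrArg gaussL (congrFun hS t)
  rw [hfun]
  exact (show HasDerivAt (fun t => gaussL (p + (t - c) • eW j l a)) (D (eW j l a)) c from hcomp).deriv

noncomputable def Vvec {m : ℕ} (i j : Fin 2) (p : Jet2 m) : Jet2 m :=
  (fun k a => if k = j then p.1 i a else 0,
   fun k l a => (if k = j then p.2 i l a else 0) + (if l = j then p.2 k i a else 0))

noncomputable def Qvec {m : ℕ} (i j : Fin 2) (p : Jet2 m) : Jet2 m :=
  (0, fun k l a => (if k = j then 1 else 0) * (if l = j then 1 else 0) * p.2 i i a)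

noncomputable def Amat (i j : Fin 2) (t : ℝ) : Matrix (Fin 2) (Fin 2) ℝ :=
  Matrix.of fun k l => (if k = l then (1:ℝ) else 0)
    + t * ((if k = j then 1 else 0) * (if l = i then 1 else 0))

lemma Amat_det (i j : Fin 2) (t : ℝ) :
    (Amat i j t).det = 1 + t * (if j = i then 1 else 0) := by
  rw [Matrix.det_fin_two]
  simp only [Amat, Matrix.of_apply]
  fin_cases i <;> fin_cases j <;> norm_num

lemma act_Amat (i j : Fin 2) (t : ℝ) (p : Jet2 m) :
    act (Amat i j t) p = p + t • Vvec i j p + t ^ 2 • Qvec i j p := by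
  refine Prod.ext ?_ ?_
  · funext k a
    show _ = p.1 k a + t * ((if k = j then p.1 i a else 0))
      + t ^ 2 * (0 : Fin 2 → Fin m → ℝ) k a
    simp only [act, Amat, Matrix.of_apply, Fin.sum_univ_two, Pi.zero_apply]
    fin_cases k <;> fin_cases i <;> fin_cases j <;> norm_num <;> ring
  · funext k l a
    show _ = p.2 k l a
      + t * ((if k = j then p.2 i l a else 0) + (if l = j then p.2 k i a else 0))
      + t ^ 2 * ((if k = j then 1 else 0) * (if l = j then 1 else 0) * p.2 i i a)
    simp only [act, Amat, Matrix.of_apply, Fin.sum_univ_two]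
    fin_cases k <;> fin_cases l <;> fin_cases i <;> fin_cases j <;> norm_num <;> ring

lemma V_decomp (i j : Fin 2) (p : Jet2 m) :
    Vvec i j p = (∑ a, p.1 i a • eU j a)
      + ((∑ a, ∑ l, p.2 i l a • eW j l a) + (∑ a, ∑ k, p.2 k i a • eW k j a)) := by
  refine Prod.ext ?_ ?_
  · funext k a'
    show (if k = j then p.1 i a' else 0) = _
    simp only [Prod.fst_add, Prod.fst_sum, Pi.add_apply, Finset.sum_apply,
      Pi.smul_apply, smul_eq_mul, eU, eW, Prod.mk.injEq, mul_ite, mul_one, mul_zero,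
      Pi.zero_apply, Finset.sum_const_zero, add_zero]
    by_cases hk : k = j <;> simp [hk]
  · funext k l a'
    show (if k = j then p.2 i l a' else 0) + (if l = j then p.2 k i a' else 0) = _
    simp only [Prod.snd_add, Prod.snd_sum, Pi.add_apply, Finset.sum_apply,
      Pi.smul_apply, smul_eq_mul, eU, eW, mul_ite, mul_one, mul_zero,
      Pi.zero_apply, Finset.sum_const_zero, zero_add]
    fin_cases k <;> fin_cases l <;> fin_cases j <;>
      simp [Finset.sum_add_distrib, Finset.sum_ite_eq]


/-- `L` is a covariant 2-Lagrangian of weight 1 in the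
infinitesimal sense: for all `i, j ∈ {1,2}`,
`x^a_i ∂L/∂x^a_j + 2 x^a_{ik} ∂L/∂x^a_{jk} = δ^j_i L` (summation over `a, k`;
with the second-derivative variables kept as a full matrix, the middle term
reads `Σ_{a,l} x^a_{il} ∂L/∂x^a_{jl} + Σ_{a,k} x^a_{ki} ∂L/∂x^a_{kj}`). -/
theorem gaussL_covariant {m : ℕ} (p : Jet2 m) (hpos : (gMat p).PosDef)
    (hsym : ∀ (a : Fin m) (i j : Fin 2), p.2 i j a = p.2 j i a) :
    ∀ i j : Fin 2,
      (∑ a, p.1 i a * pdU j a gaussL p) +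
        ((∑ a, ∑ l, p.2 i l a * pdW j l a gaussL p) +
          (∑ a, ∑ k, p.2 k i a * pdW k j a gaussL p)) =
      (if j = i then 1 else 0) * gaussL p := by
  intro i j
  have hdet : 0 < (gMat p).det := hpos.det_pos
  have hF : HasFDerivAt gaussL (fderiv ℝ gaussL p) p := (diff_gaussL p hdet).hasFDerivAt
  set D := fderiv ℝ gaussL p with hDdef
  have hU : ∀ a, pdU j a gaussL p = D (eU j a) := fun a => pdU_eq hF j a
  have hW : ∀ k l a, pdW k l a gaussL p = D (eW k l a) := fun k l a => pdW_eq hF k l a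
  have hpath : HasDerivAt (fun t => act (Amat i j t) p) (Vvec i j p) 0 := by
    have heq : (fun t => act (Amat i j t) p)
        = fun t => p + t • Vvec i j p + t ^ 2 • Qvec i j p :=
      funext fun t => act_Amat i j t p
    rw [heq]
    have h1 := ((hasDerivAt_id (0:ℝ)).smul_const (Vvec i j p)).const_add p
    have h2 := (hasDerivAt_pow 2 (0:ℝ)).smul_const (Qvec i j p)
    simpa [Pi.add_def] using h1.add h2
  have hF0 : HasFDerivAt gaussL D (act (Amat i j 0) p) := by
    rw [act_Amat]
    have h0 : p + (0:ℝ) • Vvec i j p + ((0:ℝ) ^ 2) • Qvec i j p = p := by simp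
    rw [h0]
    exact hF
  have hDV : HasDerivAt (fun t => gaussL (act (Amat i j t) p)) (D (Vvec i j p)) 0 := by
    simpa [Function.comp_def] using hF0.comp_hasDerivAt 0 hpath
  have hev : (fun t => gaussL (act (Amat i j t) p))
      =ᶠ[nhds (0:ℝ)] fun t => (1 + t * (if j = i then 1 else 0)) * gaussL p := by
    have hmem : Set.Ioo (-(1/2) : ℝ) (1/2) ∈ nhds (0:ℝ) :=
      Ioo_mem_nhds (by norm_num) (by norm_num)
    filter_upwards [hmem] with t ht
    have hc : 0 < 1 + t * (if j = i then (1:ℝ) else 0) := by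
      by_cases h : j = i
      · rw [if_pos h, mul_one]
        linarith [ht.1]
      · rw [if_neg h, mul_zero]
        norm_num
    have hAdet : (Amat i j t).det ≠ 0 := by
      rw [Amat_det]; exact ne_of_gt hc
    rw [gaussL_act _ hAdet p hdet, Amat_det, abs_of_pos hc]
  have hderiv2 : deriv (fun t : ℝ => (1 + t * (if j = i then (1:ℝ) else 0)) * gaussL p) 0
      = (if j = i then (1:ℝ) else 0) * gaussL p := by
    have h := (((hasDerivAt_id (0:ℝ)).mul_const
      (if j = i then (1:ℝ) else 0)).const_add 1).mul_const (gaussL p)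
    simpa using h.deriv
  have hDVval : D (Vvec i j p) = (if j = i then (1:ℝ) else 0) * gaussL p := by
    rw [← hDV.deriv, hev.deriv_eq, hderiv2]
  simp only [hU, hW]
  rw [← hDVval, V_decomp i j p]
  simp [map_sum, smul_eq_mul]
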